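/- arXiv:1009.3090 — 2 statements merged into one kernel-verified Lean document; each statement's English description precedes it below -/
import Mathlib

section
/- Let m be a positive integer, θ > 0, c ≥ 0, and let s be a real number with 0 ≤ s < 1. Then ∫_c^∞ (w - c)^{-s} w^{m-1} e^{-w/θ} dw = e^{-c/θ} · Σ_{ℓ=0}^{m-1} binom(m-1, ℓ) c^ℓ Γ(m - ℓ - s) θ^{m - ℓ - s}. -/
open MeasureTheory Real

lemma aux_integrable {a r : ℝ} (ha : 0 < a) (hr : 0 < r) :
    IntegrableOn (fun t : ℝ => t ^ (a - 1) * Real.exp (-(r * t))) (Set.Ioi 0) := by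
  have h0 := Real.GammaIntegral_convergent ha
  have h1 : IntegrableOn (fun x : ℝ => Real.exp (-(r * x)) * (r * x) ^ (a - 1))
      (Set.Ioi 0) := by
    have := (integrableOn_Ioi_comp_mul_left_iff
      (fun x : ℝ => Real.exp (-x) * x ^ (a - 1)) 0 hr).2 (by simpa using h0)
    simpa using this
  have h2 : IntegrableOn (fun x : ℝ => r ^ (a - 1) *
      (Real.exp (-(r * x)) * x ^ (a - 1))) (Set.Ioi 0) := by
    apply (h1.congr_fun ?_ measurableSet_Ioi)
    intro x hx
    simp only
    rw [Real.mul_rpow hr.le (le_of_lt hx)]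
    ring
  have h3 : IntegrableOn (fun x : ℝ => (r ^ (a - 1))⁻¹ * (r ^ (a - 1) *
      (Real.exp (-(r * x)) * x ^ (a - 1)))) (Set.Ioi 0) := h2.const_mul _
  apply h3.congr_fun ?_ measurableSet_Ioi
  intro x hx
  have hr' : (r : ℝ) ^ (a - 1) ≠ 0 := (Real.rpow_pos_of_pos hr _).ne'
  simp only
  field_simp

/-- For a positive integer `m`, `θ > 0`, `c ≥ 0` and `0 ≤ s < 1`:
`∫_c^∞ (w - c)^{-s} w^{m-1} e^{-w/θ} dw
  = e^{-c/θ} Σ_{ℓ=0}^{m-1} binom(m-1, ℓ) c^ℓ Γ(m - ℓ - s) θ^{m - ℓ - s}`. -/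
theorem integral_rpow_mul_pow_mul_exp (m : ℕ) (hm : 0 < m) (θ : ℝ) (hθ : 0 < θ)
    (c : ℝ) (hc : 0 ≤ c) (s : ℝ) (hs0 : 0 ≤ s) (hs1 : s < 1) :
    ∫ w in Set.Ioi c, (w - c) ^ (-s) * w ^ (m - 1) * Real.exp (-w / θ) =
      Real.exp (-c / θ) *
        ∑ ℓ ∈ Finset.range m,
          (Nat.choose (m - 1) ℓ : ℝ) * c ^ ℓ * Real.Gamma ((m : ℝ) - ℓ - s) *
            θ ^ ((m : ℝ) - ℓ - s) := by
  have hApos : ∀ ℓ ∈ Finset.range m, 0 < (m : ℝ) - ℓ - s := by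
    intro ℓ hℓ
    rw [Finset.mem_range] at hℓ
    have : (ℓ : ℝ) + 1 ≤ (m : ℝ) := by exact_mod_cast hℓ
    linarith
  -- translation
  have htrans : (∫ w in Set.Ioi c, (w - c) ^ (-s) * w ^ (m - 1) * Real.exp (-w / θ)) =
      ∫ t in Set.Ioi (0 : ℝ),
        (t : ℝ) ^ (-s) * (t + c) ^ (m - 1) * Real.exp (-(t + c) / θ) := by
    rw [← (measurePreserving_add_right volume c).setIntegral_preimage_emb
      (measurableEmbedding_addRight c)
      (fun w => (w - c) ^ (-s) * w ^ (m - 1) * Real.exp (-w / θ)) (Set.Ioi c)]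
    simp [add_sub_cancel_right]
  rw [htrans]
  -- rewrite integrand as a sum on Ioi 0
  have hcong : ∫ t in Set.Ioi (0 : ℝ),
      (t : ℝ) ^ (-s) * (t + c) ^ (m - 1) * Real.exp (-(t + c) / θ) =
      ∫ t in Set.Ioi (0 : ℝ), Real.exp (-c / θ) *
        ∑ ℓ ∈ Finset.range m, (Nat.choose (m - 1) ℓ : ℝ) * c ^ ℓ *
          (t ^ ((m : ℝ) - ℓ - s - 1) * Real.exp (-(θ⁻¹ * t))) := by
    apply setIntegral_congr_fun measurableSet_Ioi
    intro t ht
    have ht' : (0 : ℝ) < t := ht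
    simp only
    have hpow : (t + c) ^ (m - 1) = ∑ ℓ ∈ Finset.range m,
        c ^ ℓ * t ^ (m - 1 - ℓ) * (Nat.choose (m - 1) ℓ : ℝ) := by
      have := add_pow c t (m - 1)
      rw [Nat.sub_add_cancel hm] at this
      rw [add_comm t c, this]
    rw [hpow, Finset.mul_sum, Finset.mul_sum, Finset.sum_mul]
    apply Finset.sum_congr rfl
    intro ℓ hℓ
    rw [Finset.mem_range] at hℓ
    have hℓ' : ℓ ≤ m - 1 := Nat.le_sub_one_of_lt hℓ
    have hcast : ((m - 1 - ℓ : ℕ) : ℝ) = (m : ℝ) - 1 - ℓ := by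
      have h1 : (1 : ℕ) ≤ m := hm
      push_cast [Nat.sub_sub, Nat.cast_sub (by omega : 1 + ℓ ≤ m)]
      ring
    have hts : t ^ (-s) * t ^ (m - 1 - ℓ) = t ^ ((m : ℝ) - ℓ - s - 1) := by
      rw [← Real.rpow_natCast t (m - 1 - ℓ), ← Real.rpow_add ht', hcast]
      ring_nf
    have hexp : Real.exp (-(t + c) / θ) = Real.exp (-c / θ) * Real.exp (-(θ⁻¹ * t)) := by
      rw [← Real.exp_add]
      congr 1
      field_simp
      ring
    calc t ^ (-s) * (c ^ ℓ * t ^ (m - 1 - ℓ) * (Nat.choose (m - 1) ℓ : ℝ)) *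
          Real.exp (-(t + c) / θ)
        = (t ^ (-s) * t ^ (m - 1 - ℓ)) * (c ^ ℓ * (Nat.choose (m - 1) ℓ : ℝ)) *
          Real.exp (-(t + c) / θ) := by ring
      _ = _ := by rw [hts, hexp]; ring
  rw [hcong, MeasureTheory.integral_const_mul]
  congr 1
  rw [integral_finset_sum]
  · apply Finset.sum_congr rfl
    intro ℓ hℓ
    rw [MeasureTheory.integral_const_mul, integral_rpow_mul_exp_neg_mul_Ioi (hApos ℓ hℓ) (inv_pos.2 hθ)]
    rw [one_div, inv_inv]
    ring
  · intro ℓ hℓ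
    exact (aux_integrable (hApos ℓ hℓ) (inv_pos.2 hθ)).const_mul _
end

section
/- Fix α > 2. The function h(x) = (Γ(x - 1 + 2/α) / Γ(x - 1)) · (1 + 2x / (α (x - 1))) is strictly increasing on the interval (1, ∞). Consequently, for any right-hand-side constant C > 0, the equation (Γ(x - 1 + 2/α)/Γ(x - 1)) · (1 + 2x/(α(x-1))) = C has at most one solution x > 1, so the optimal number of data streams M^opt = min(max(⌊x⌋, 1), N) determined by this equation is unique. -/
open Real Set

noncomputable def mrcPsi (s : ℝ) : ℝ := deriv (fun x => Real.log (Real.Gamma x)) s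

lemma mrc_diffAt_logGamma {s : ℝ} (hs : 0 < s) :
    DifferentiableAt ℝ (fun x => Real.log (Real.Gamma x)) s := by
  refine (Real.differentiableAt_Gamma fun m => ?_).log (Real.Gamma_pos_of_pos hs).ne'
  have : -(m : ℝ) ≤ 0 := neg_nonpos.mpr m.cast_nonneg
  exact (this.trans_lt hs).ne'

lemma mrc_hasDerivAt_logGamma {s : ℝ} (hs : 0 < s) :
    HasDerivAt (fun x => Real.log (Real.Gamma x)) (mrcPsi s) s :=
  (mrc_diffAt_logGamma hs).hasDerivAt

lemma mrcPsi_mono : MonotoneOn mrcPsi (Set.Ioi 0) := by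
  have h := Real.convexOn_log_Gamma.monotoneOn_deriv
    (fun x hx => by
      have := mrc_diffAt_logGamma (mem_Ioi.mp hx)
      simpa [Function.comp_def] using this)
  exact h

lemma mrcPsi_rec {s : ℝ} (hs : 0 < s) : mrcPsi (s + 1) = mrcPsi s + 1 / s := by
  have h1 : HasDerivAt (fun x : ℝ => Real.log (Real.Gamma (x + 1))) (mrcPsi (s + 1)) s := by
    have := (mrc_hasDerivAt_logGamma (by linarith : (0:ℝ) < s + 1)).comp s
      ((hasDerivAt_id s).add_const 1)
    simp only [mul_one, Function.comp_def, id] at this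
    exact this
  have h2 : HasDerivAt (fun x : ℝ => Real.log (Real.Gamma x) + Real.log x)
      (mrcPsi s + 1 / s) s := by
    have := (mrc_hasDerivAt_logGamma hs).add (Real.hasDerivAt_log hs.ne')
    rw [one_div]
    exact this
  have heq : (fun x : ℝ => Real.log (Real.Gamma (x + 1)))
      =ᶠ[nhds s] (fun x : ℝ => Real.log (Real.Gamma x) + Real.log x) := by
    filter_upwards [Ioi_mem_nhds hs] with x hx
    rw [Real.Gamma_add_one (ne_of_gt (mem_Ioi.mp hx)),
      Real.log_mul (mem_Ioi.mp hx).ne' (Real.Gamma_pos_of_pos (mem_Ioi.mp hx)).ne', add_comm]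
  exact (h1.congr_of_eventuallyEq heq.symm).unique h2

/-- For `α > 2`, the function `h(x) = (Γ(x-1+2/α)/Γ(x-1)) (1 + 2x/(α(x-1)))` is strictly
increasing on `(1, ∞)`; consequently for any `C > 0` the equation `h(x) = C` has at most
one solution `x > 1`, so the throughput-optimal number of MRC data streams determined by
this equation is unique. -/
theorem mrc_stream_equation_strict_mono (α : ℝ) (hα : 2 < α) :
    StrictMonoOn
      (fun x : ℝ =>
        Real.Gamma (x - 1 + 2 / α) / Real.Gamma (x - 1) * (1 + 2 * x / (α * (x - 1))))
      (Ioi 1) ∧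
    ∀ C : ℝ, 0 < C → ∀ x ∈ Ioi (1 : ℝ), ∀ y ∈ Ioi (1 : ℝ),
      Real.Gamma (x - 1 + 2 / α) / Real.Gamma (x - 1) * (1 + 2 * x / (α * (x - 1))) = C →
      Real.Gamma (y - 1 + 2 / α) / Real.Gamma (y - 1) * (1 + 2 * y / (α * (y - 1))) = C →
      x = y := by
  have hα0 : (0 : ℝ) < α := by linarith
  set a : ℝ := 2 / α with ha_def
  have ha0 : 0 < a := by positivity
  have ha1 : a < 1 := by rw [ha_def, div_lt_one hα0]; linarith
  -- the log of the function
  set G : ℝ → ℝ := fun x =>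
    Real.log (Real.Gamma (x - 1 + a)) - Real.log (Real.Gamma (x - 1))
      + Real.log ((1 + a) * (x - 1) + a) - Real.log (x - 1) with hG_def
  -- derivative of G
  have hG_deriv : ∀ x ∈ Ioi (1 : ℝ), HasDerivAt G
      (mrcPsi (x - 1 + a) - mrcPsi (x - 1)
        + (1 + a) / ((1 + a) * (x - 1) + a) - 1 / (x - 1)) x := by
    intro x hx
    have ht : (0 : ℝ) < x - 1 := by simpa [sub_pos] using mem_Ioi.mp hx
    have hta : (0 : ℝ) < x - 1 + a := by linarith
    have hu : (0 : ℝ) < (1 + a) * (x - 1) + a := by nlinarith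
    have h1 : HasDerivAt (fun x : ℝ => Real.log (Real.Gamma (x - 1 + a)))
        (mrcPsi (x - 1 + a)) x := by
      have := (mrc_hasDerivAt_logGamma hta).comp x
        (((hasDerivAt_id x).sub_const 1).add_const a)
      simp only [mul_one, Function.comp_def, id] at this
      exact this
    have h2 : HasDerivAt (fun x : ℝ => Real.log (Real.Gamma (x - 1)))
        (mrcPsi (x - 1)) x := by
      have := (mrc_hasDerivAt_logGamma ht).comp x ((hasDerivAt_id x).sub_const 1)
      simp only [mul_one, Function.comp_def, id] at this
      exact this
    have h3 : HasDerivAt (fun x : ℝ => Real.log ((1 + a) * (x - 1) + a))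
        ((1 + a) / ((1 + a) * (x - 1) + a)) x := by
      have hinner : HasDerivAt (fun x : ℝ => (1 + a) * (x - 1) + a) (1 + a) x := by
        have := (((hasDerivAt_id x).sub_const 1).const_mul (1 + a)).add_const a
        simpa using this
      exact hinner.log hu.ne'
    have h4 : HasDerivAt (fun x : ℝ => Real.log (x - 1)) (1 / (x - 1)) x := by
      have := ((hasDerivAt_id x).sub_const 1).log ht.ne'
      simpa using this
    exact ((h1.sub h2).add h3).sub h4
  -- positivity of the derivative
  have hG_pos : ∀ x ∈ Ioi (1 : ℝ),
      0 < mrcPsi (x - 1 + a) - mrcPsi (x - 1)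
        + (1 + a) / ((1 + a) * (x - 1) + a) - 1 / (x - 1) := by
    intro x hx
    have ht : (0 : ℝ) < x - 1 := by simpa [sub_pos] using mem_Ioi.mp hx
    set t : ℝ := x - 1 with ht_def
    have hta : (0 : ℝ) < t + a := by linarith
    have hu : (0 : ℝ) < (1 + a) * t + a := by nlinarith
    -- recurrences
    have r1 : mrcPsi (t + a + 1) = mrcPsi (t + a) + 1 / (t + a) := mrcPsi_rec hta
    have r2 : mrcPsi (t + 1) = mrcPsi t + 1 / t := mrcPsi_rec ht
    have hmono : mrcPsi (t + 1) ≤ mrcPsi (t + a + 1) :=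
      mrcPsi_mono (mem_Ioi.mpr (by linarith)) (mem_Ioi.mpr (by linarith)) (by linarith)
    have key : 1 / t - 1 / (t + a) ≤ mrcPsi (t + a) - mrcPsi t := by
      have := hmono
      rw [r1, r2] at this
      linarith
    have halg : 0 < (1 + a) / ((1 + a) * t + a) - 1 / (t + a) := by
      rw [sub_pos, div_lt_div_iff₀ hta hu]
      nlinarith
    have : 1 / (t + a) ≤ mrcPsi (t + a) - mrcPsi t + 1 / (t + a) - 1 / t + 1 / (t + a) := by
      linarith
    linarith
  -- G is strictly monotone
  have hG_mono : StrictMonoOn G (Ioi 1) := by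
    apply strictMonoOn_of_deriv_pos (convex_Ioi 1)
    · exact fun x hx => (hG_deriv x hx).continuousAt.continuousWithinAt
    · intro x hx
      rw [interior_Ioi] at hx
      rw [(hG_deriv x hx).deriv]
      exact hG_pos x hx
  -- the original function equals exp ∘ G on `Ioi 1`
  have hfeq : ∀ x ∈ Ioi (1 : ℝ),
      Real.Gamma (x - 1 + 2 / α) / Real.Gamma (x - 1) * (1 + 2 * x / (α * (x - 1)))
        = Real.exp (G x) := by
    intro x hx
    have ht : (0 : ℝ) < x - 1 := by simpa [sub_pos] using mem_Ioi.mp hx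
    have hta : (0 : ℝ) < x - 1 + a := by linarith
    have hu : (0 : ℝ) < (1 + a) * (x - 1) + a := by nlinarith
    have hg1 : (0 : ℝ) < Real.Gamma (x - 1 + a) := Real.Gamma_pos_of_pos hta
    have hg2 : (0 : ℝ) < Real.Gamma (x - 1) := Real.Gamma_pos_of_pos ht
    have : G x = (Real.log (Real.Gamma (x - 1 + a)) + Real.log ((1 + a) * (x - 1) + a))
        - (Real.log (Real.Gamma (x - 1)) + Real.log (x - 1)) := by
      rw [hG_def]; ring
    rw [this, Real.exp_sub, Real.exp_add, Real.exp_add, Real.exp_log hg1, Real.exp_log hg2,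
      Real.exp_log hu, Real.exp_log ht]
    rw [ha_def]
    field_simp
    ring
  have hmain : StrictMonoOn
      (fun x : ℝ =>
        Real.Gamma (x - 1 + 2 / α) / Real.Gamma (x - 1) * (1 + 2 * x / (α * (x - 1))))
      (Ioi 1) := by
    intro x hx y hy hxy
    simp only
    rw [hfeq x hx, hfeq y hy]
    exact Real.exp_lt_exp.mpr (hG_mono hx hy hxy)
  refine ⟨hmain, ?_⟩
  intro C hC x hx y hy hxC hyC
  exact hmain.injOn hx hy (by rw [hxC, hyC])
end
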